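/- The function T₁(y) = [(1−y⁴)·log(1+y²) + 2y⁴ − y² − 4y²·∫₁^y (log(1+x²)/x) dx] / (2y(1+y²)) is twice differentiable on (0,∞) and satisfies (H T₁)(y) = Λφ(y) for every y > 0. -/

import Mathlib

open MeasureTheory

noncomputable section

/-- The potential `V(y) = (y⁴-6y²+1)/(1+y²)²`. -/
def Vf (y : ℝ) : ℝ := (y ^ 4 - 6 * y ^ 2 + 1) / (1 + y ^ 2) ^ 2

/-- The linearized Hamiltonian `H f = -f'' - f'/y + V f / y²`. -/
def Hop (f : ℝ → ℝ) (y : ℝ) : ℝ :=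
  -(deriv (deriv f) y) - deriv f y / y + Vf y * f y / y ^ 2

/-- The resonance `Λφ(y) = 2y/(1+y²)`. -/
def Lphi (y : ℝ) : ℝ := 2 * y / (1 + y ^ 2)

/-- The explicit profile `T₁` solving `H T₁ = Λφ`. -/
def T1 (y : ℝ) : ℝ :=
  ((1 - y ^ 4) * Real.log (1 + y ^ 2) + 2 * y ^ 4 - y ^ 2
      - 4 * y ^ 2 * ∫ x in (1 : ℝ)..y, Real.log (1 + x ^ 2) / x)
    / (2 * y * (1 + y ^ 2))

/-- The integral appearing in `T₁`. -/
def Jint (y : ℝ) : ℝ := ∫ x in (1 : ℝ)..y, Real.log (1 + x ^ 2) / x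

/-- First derivative of `T₁` on `(0,∞)`. -/
def T1d (y : ℝ) : ℝ :=
  -((y ^ 4 + 6 * y ^ 2 + 1) / (2 * y ^ 2 * (1 + y ^ 2))) * Real.log (1 + y ^ 2)
    + (1 + 7 * y ^ 2) / (2 * (1 + y ^ 2) ^ 2)
    - 2 * (1 - y ^ 2) / (1 + y ^ 2) ^ 2 * Jint y

/-- Second derivative of `T₁` on `(0,∞)`. -/
def T1dd (y : ℝ) : ℝ :=
  (7 * y ^ 4 + 1) / (y ^ 3 * (1 + y ^ 2) ^ 2) * Real.log (1 + y ^ 2)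
    + (-((y ^ 4 + 6 * y ^ 2 + 1) / (y * (1 + y ^ 2) ^ 2))
        + (5 * y - 7 * y ^ 3) / (1 + y ^ 2) ^ 3)
    - 4 * y * (y ^ 2 - 3) / (1 + y ^ 2) ^ 3 * Jint y

lemma Jint_hasDerivAt {y : ℝ} (hy : 0 < y) :
    HasDerivAt Jint (Real.log (1 + y ^ 2) / y) y := by
  have hfc : ContinuousOn (fun x : ℝ => Real.log (1 + x ^ 2) / x) (Set.Ioi 0) := by
    intro x hx
    have hx0 : x ≠ 0 := ne_of_gt hx
    exact (((Real.continuousAt_log (by positivity : (1:ℝ) + x ^ 2 ≠ 0)).comp (f := fun u : ℝ => 1 + u ^ 2)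
      (continuousAt_const.add (continuousAt_id.pow 2))).div continuousAt_id
        hx0).continuousWithinAt
  have hsub : Set.uIcc (1 : ℝ) y ⊆ Set.Ioi 0 := by
    intro z hz
    rw [Set.mem_uIcc] at hz
    rcases hz with ⟨h1, _⟩ | ⟨h1, _⟩
    · exact lt_of_lt_of_le one_pos h1
    · exact lt_of_lt_of_le hy h1
  have hint : IntervalIntegrable (fun x : ℝ => Real.log (1 + x ^ 2) / x) volume 1 y :=
    (hfc.mono hsub).intervalIntegrable
  have hmeas : StronglyMeasurableAtFilter (fun x : ℝ => Real.log (1 + x ^ 2) / x) (nhds y) :=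
    hfc.stronglyMeasurableAtFilter isOpen_Ioi y hy
  have hcont : ContinuousAt (fun x : ℝ => Real.log (1 + x ^ 2) / x) y :=
    (hfc y hy).continuousAt (Ioi_mem_nhds hy)
  exact intervalIntegral.integral_hasDerivAt_right hint hmeas hcont

lemma one_add_sq_pos (y : ℝ) : (0:ℝ) < 1 + y ^ 2 := by positivity

lemma log_hasDerivAt (y : ℝ) :
    HasDerivAt (fun u : ℝ => Real.log (1 + u ^ 2)) ((1 + y ^ 2)⁻¹ * (2 * y)) y := by
  have h1 : HasDerivAt (fun u : ℝ => 1 + u ^ 2) (2 * y) y := by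
    simpa using (hasDerivAt_pow 2 y).const_add 1
  exact (Real.hasDerivAt_log (ne_of_gt (one_add_sq_pos y))).comp y h1

lemma T1_hasDerivAt {y : ℝ} (hy : 0 < y) : HasDerivAt T1 (T1d y) y := by
  have hy0 : y ≠ 0 := ne_of_gt hy
  have h1p : (0:ℝ) < 1 + y ^ 2 := one_add_sq_pos y
  have h1 : HasDerivAt (fun u : ℝ => 1 + u ^ 2) (2 * y) y := by
    simpa using (hasDerivAt_pow 2 y).const_add 1
  have hL := log_hasDerivAt y
  have hJ := Jint_hasDerivAt hy
  have hA : HasDerivAt (fun u : ℝ => 1 - u ^ 4) (-(4 * y ^ 3)) y := by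
    simpa using (hasDerivAt_pow 4 y).const_sub 1
  have hB : HasDerivAt (fun u : ℝ => 2 * u ^ 4) (2 * (4 * y ^ 3)) y := by
    simpa using (hasDerivAt_pow 4 y).const_mul 2
  have hC : HasDerivAt (fun u : ℝ => u ^ 2) (2 * y) y := by
    simpa using hasDerivAt_pow 2 y
  have hD4 : HasDerivAt (fun u : ℝ => 4 * u ^ 2) (4 * (2 * y)) y := by
    simpa using (hasDerivAt_pow 2 y).const_mul 4
  have hN : HasDerivAt
      (fun u : ℝ => (1 - u ^ 4) * Real.log (1 + u ^ 2) + 2 * u ^ 4 - u ^ 2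
        - 4 * u ^ 2 * Jint u)
      ((-(4 * y ^ 3)) * Real.log (1 + y ^ 2) + (1 - y ^ 4) * ((1 + y ^ 2)⁻¹ * (2 * y))
        + 2 * (4 * y ^ 3) - 2 * y
        - (4 * (2 * y) * Jint y + 4 * y ^ 2 * (Real.log (1 + y ^ 2) / y))) y :=
    (((hA.mul hL).add hB).sub hC).sub (hD4.mul hJ)
  have hDen : HasDerivAt (fun u : ℝ => 2 * u * (1 + u ^ 2))
      (2 * 1 * (1 + y ^ 2) + 2 * y * (2 * y)) y :=
    ((hasDerivAt_id y).const_mul 2).mul h1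
  have hDne : 2 * y * (1 + y ^ 2) ≠ 0 := by positivity
  have key := hN.div hDen hDne
  refine key.congr_deriv ?_
  unfold T1d
  field_simp
  ring

lemma T1d_hasDerivAt {y : ℝ} (hy : 0 < y) : HasDerivAt T1d (T1dd y) y := by
  have hy0 : y ≠ 0 := ne_of_gt hy
  have h1p : (0:ℝ) < 1 + y ^ 2 := one_add_sq_pos y
  have h1 : HasDerivAt (fun u : ℝ => 1 + u ^ 2) (2 * y) y := by
    simpa using (hasDerivAt_pow 2 y).const_add 1
  have hL := log_hasDerivAt y
  have hJ := Jint_hasDerivAt hy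
  -- term 1 : -((u^4+6u^2+1)/(2u^2(1+u^2))) * log(1+u^2)
  have hnum1 : HasDerivAt (fun u : ℝ => u ^ 4 + 6 * u ^ 2 + 1)
      (4 * y ^ 3 + 6 * (2 * y)) y := by
    simpa using ((hasDerivAt_pow 4 y).add ((hasDerivAt_pow 2 y).const_mul 6)).add_const 1
  have hden1 : HasDerivAt (fun u : ℝ => 2 * u ^ 2 * (1 + u ^ 2))
      (2 * (2 * y) * (1 + y ^ 2) + 2 * y ^ 2 * (2 * y)) y := by
    simpa [Pi.mul_def] using ((hasDerivAt_pow 2 y).const_mul 2).mul h1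
  have hden1ne : 2 * y ^ 2 * (1 + y ^ 2) ≠ 0 := by positivity
  have ht1 := ((hnum1.div hden1 hden1ne).neg).mul hL
  -- term 2 : (1+7u^2)/(2*(1+u^2)^2)
  have hnum2 : HasDerivAt (fun u : ℝ => 1 + 7 * u ^ 2) (7 * (2 * y)) y := by
    simpa using ((hasDerivAt_pow 2 y).const_mul 7).const_add 1
  have hden2 : HasDerivAt (fun u : ℝ => 2 * (1 + u ^ 2) ^ 2)
      (2 * (2 * (1 + y ^ 2) ^ 1 * (2 * y))) y := by
    simpa using (h1.pow 2).const_mul 2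
  have hden2ne : 2 * (1 + y ^ 2) ^ 2 ≠ 0 := by positivity
  have ht2 := hnum2.div hden2 hden2ne
  -- term 3 : (2*(1-u^2)/(1+u^2)^2) * Jint u
  have hnum3 : HasDerivAt (fun u : ℝ => 2 * (1 - u ^ 2)) (2 * (-(2 * y))) y := by
    simpa using ((hasDerivAt_pow 2 y).const_sub 1).const_mul 2
  have hden3 : HasDerivAt (fun u : ℝ => (1 + u ^ 2) ^ 2)
      (2 * (1 + y ^ 2) ^ 1 * (2 * y)) y := by
    simpa [Pi.pow_def] using h1.pow 2
  have hden3ne : (1 + y ^ 2) ^ 2 ≠ 0 := by positivity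
  have ht3 := (hnum3.div hden3 hden3ne).mul hJ
  have key := (ht1.add ht2).sub ht3
  refine key.congr_deriv ?_
  unfold T1dd
  simp only [Pi.div_apply, Pi.neg_apply]
  field_simp
  ring

/-- `T₁` is twice differentiable on `(0,∞)` and satisfies `H T₁ = Λφ` there. -/
theorem H_T1_eq_Lphi :
    ∀ y > (0 : ℝ),
      (DifferentiableAt ℝ T1 y ∧ DifferentiableAt ℝ (deriv T1) y) ∧
      Hop T1 y = Lphi y := by
  intro y hy
  have hy0 : y ≠ 0 := ne_of_gt hy
  have h1p : (0:ℝ) < 1 + y ^ 2 := one_add_sq_pos y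
  have h1ne : (1:ℝ) + y ^ 2 ≠ 0 := ne_of_gt h1p
  have hev : deriv T1 =ᶠ[nhds y] T1d := by
    filter_upwards [Ioi_mem_nhds hy] with z hz
    exact (T1_hasDerivAt hz).deriv
  have hd1 : deriv T1 y = T1d y := (T1_hasDerivAt hy).deriv
  have hdd : deriv (deriv T1) y = T1dd y := by
    rw [hev.deriv_eq]
    exact (T1d_hasDerivAt hy).deriv
  refine ⟨⟨(T1_hasDerivAt hy).differentiableAt, ?_⟩, ?_⟩
  · exact hev.differentiableAt_iff.mpr (T1d_hasDerivAt hy).differentiableAt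
  · unfold Hop
    rw [hdd, hd1]
    unfold T1dd T1d T1 Vf Lphi Jint
    field_simp
    ring

end
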